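/- For the multirelational diamond ⟨R⟩P = d(R · P), the characterization ⟨R⟩P = {(a,{a}) | ∃ B, (a,B) ∈ R ∧ ∀ b ∈ B, (b,{b}) ∈ P} holds for every multirelation R and every subidentity P ⊆ 1_σ. -/
import Mathlib


open Set

/-- Sequential composition of multirelations (Peleg). -/
def mseq {X : Type*} (R S : Set (X × Set X)) : Set (X × Set X) :=
  {p | ∃ B, (p.1, B) ∈ R ∧ ∃ f : X → Set X, (∀ b ∈ B, (b, f b) ∈ S) ∧ p.2 = ⋃ b ∈ B, f b}

/-- The unit of sequential composition. -/
def sunit (X : Type*) : Set (X × Set X) := {p | p.2 = {p.1}}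

/-- Parallel (concurrent) composition of multirelations. -/
def mpar {X : Type*} (R S : Set (X × Set X)) : Set (X × Set X) :=
  {p | ∃ A B, (p.1, A) ∈ R ∧ (p.1, B) ∈ S ∧ p.2 = A ∪ B}

/-- The unit of parallel composition. -/
def punit (X : Type*) : Set (X × Set X) := {p | p.2 = (∅ : Set X)}

/-- Domain of a multirelation. -/
def mdom {X : Type*} (R : Set (X × Set X)) : Set (X × Set X) :=
  {p | p.2 = {p.1} ∧ ∃ A, (p.1, A) ∈ R}

/-- Antidomain of a multirelation. -/
def mantidom {X : Type*} (R : Set (X × Set X)) : Set (X × Set X) :=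
  {p | p.2 = {p.1} ∧ ¬ ∃ A, (p.1, A) ∈ R}

/-- Diamond operator. -/
def mdia {X : Type*} (R P : Set (X × Set X)) : Set (X × Set X) := mdom (mseq R P)

theorem stmt18 {X : Type*} (R P : Set (X × Set X)) (hP : P ⊆ sunit X) :
    mdia R P = {p | p.2 = {p.1} ∧ ∃ B, (p.1, B) ∈ R ∧ ∀ b ∈ B, (b, ({b} : Set X)) ∈ P} := by
  ext ⟨a, A⟩
  simp only [mdia, mdom, mseq, Set.mem_setOf_eq]
  constructor
  · rintro ⟨hA, C, B, hB, f, hf, rfl⟩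
    refine ⟨hA, B, hB, fun b hb => ?_⟩
    have := hP (hf b hb)
    simp only [sunit, Set.mem_setOf_eq] at this
    rw [← this]; exact hf b hb
  · rintro ⟨hA, B, hB, h⟩
    exact ⟨hA, _, B, hB, fun b => {b}, h, rfl⟩
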